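/- Let τ > 0, α ∈ (0,1), and λ₀⁺ = (4/(α(1-α)))·sinh(2τ)/(1 - cosh(2τ) + τ sinh(2τ)). Then λ₀⁺ > 0, and the function u(t) = sinh(2τ)(sinh(2t) - 2t) + (1 - cosh(2τ)) cosh(2t) + 2(1-α)(1 - cosh(2τ) + τ sinh(2τ)) - 1 + cosh(2τ) satisfies: (i) (d²/dt² - 4)(d²/dt²)u = 0 on [0,τ]; (ii) u'(0) = 0 and u'(τ) = 0; (iii) α^{-1} u'''(0) = λ₀⁺ u(0); and (iv) -(1-α)^{-1} u'''(τ) = λ₀⁺ u(τ). -/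

import Mathlib

private lemma hd_base (a b c : ℝ) (t : ℝ) :
    HasDerivAt (fun t => a * (Real.sinh (2*t) - 2*t) + b * Real.cosh (2*t) + c)
      (2*a*Real.cosh (2*t) + 2*b*Real.sinh (2*t) + (-(2*a))) t := by
  have h2 : HasDerivAt (fun t : ℝ => 2*t) 2 t := by
    simpa using (hasDerivAt_id t).const_mul 2
  have hs : HasDerivAt (fun t : ℝ => Real.sinh (2*t)) (Real.cosh (2*t) * 2) t :=
    (Real.hasDerivAt_sinh (2*t)).comp t h2
  have hc : HasDerivAt (fun t : ℝ => Real.cosh (2*t)) (Real.sinh (2*t) * 2) t :=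
    (Real.hasDerivAt_cosh (2*t)).comp t h2
  have := (((hs.sub h2).const_mul a).add (hc.const_mul b)).add_const c
  exact this.congr_deriv (by ring)

private lemma hd_step (a b c : ℝ) (t : ℝ) :
    HasDerivAt (fun t => a * Real.cosh (2*t) + b * Real.sinh (2*t) + c)
      (2*b*Real.cosh (2*t) + 2*a*Real.sinh (2*t) + 0) t := by
  have h2 : HasDerivAt (fun t : ℝ => 2*t) 2 t := by
    simpa using (hasDerivAt_id t).const_mul 2
  have hs : HasDerivAt (fun t : ℝ => Real.sinh (2*t)) (Real.cosh (2*t) * 2) t :=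
    (Real.hasDerivAt_sinh (2*t)).comp t h2
  have hc : HasDerivAt (fun t : ℝ => Real.cosh (2*t)) (Real.sinh (2*t) * 2) t :=
    (Real.hasDerivAt_cosh (2*t)).comp t h2
  have := ((hc.const_mul a).add (hs.const_mul b)).add_const c
  exact this.congr_deriv (by ring)

private lemma sinh_lt_mul_cosh {x : ℝ} (hx : 0 < x) : Real.sinh x < x * Real.cosh x := by
  have hmono : StrictMonoOn (fun y : ℝ => y * Real.cosh y - Real.sinh y) (Set.Ici 0) := by
    have hder : ∀ y : ℝ, HasDerivAt (fun y : ℝ => y * Real.cosh y - Real.sinh y)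
        (y * Real.sinh y) y := by
      intro y
      have := ((hasDerivAt_id y).mul (Real.hasDerivAt_cosh y)).sub (Real.hasDerivAt_sinh y)
      exact this.congr_deriv (by simp)
    apply strictMonoOn_of_deriv_pos (convex_Ici 0)
    · exact (Continuous.sub (continuous_id.mul Real.continuous_cosh)
        Real.continuous_sinh).continuousOn
    · intro y hy
      rw [interior_Ici] at hy
      rw [(hder y).deriv]
      exact mul_pos hy (Real.sinh_pos_iff.mpr hy)
  have := hmono (Set.self_mem_Ici) (Set.mem_Ici.mpr hx.le) hx
  simp at this
  linarith

theorem annulus_zero_mode_eigenfunction (τ α : ℝ) (hτ : 0 < τ) (hα : α ∈ Set.Ioo (0 : ℝ) 1) :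
    let lam : ℝ := (4 / (α * (1 - α))) *
      (Real.sinh (2 * τ) / (1 - Real.cosh (2 * τ) + τ * Real.sinh (2 * τ)))
    let u : ℝ → ℝ := fun t =>
      Real.sinh (2 * τ) * (Real.sinh (2 * t) - 2 * t)
        + (1 - Real.cosh (2 * τ)) * Real.cosh (2 * t)
        + 2 * (1 - α) * (1 - Real.cosh (2 * τ) + τ * Real.sinh (2 * τ))
        - 1 + Real.cosh (2 * τ)
    0 < lam ∧
      (∀ t ∈ Set.Icc (0 : ℝ) τ, iteratedDeriv 4 u t - 4 * iteratedDeriv 2 u t = 0) ∧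
      deriv u 0 = 0 ∧ deriv u τ = 0 ∧
      α⁻¹ * iteratedDeriv 3 u 0 = lam * u 0 ∧
      -(1 - α)⁻¹ * iteratedDeriv 3 u τ = lam * u τ := by
  intro lam u
  set A : ℝ := Real.sinh (2 * τ) with hA
  set B : ℝ := 1 - Real.cosh (2 * τ) with hB
  set D : ℝ := 1 - Real.cosh (2 * τ) + τ * Real.sinh (2 * τ) with hD
  have hα0 : 0 < α := hα.1
  have hα1 : α < 1 := hα.2
  -- positivity of D
  have hDpos : 0 < D := by
    have h1 : Real.sinh τ < τ * Real.cosh τ := sinh_lt_mul_cosh hτ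
    have hsp : 0 < Real.sinh τ := Real.sinh_pos_iff.mpr hτ
    have hc2 : Real.cosh (2*τ) = 2 * Real.sinh τ ^ 2 + 1 := by
      rw [two_mul, Real.cosh_add]; nlinarith [Real.cosh_sq_sub_sinh_sq τ]
    have hs2 : Real.sinh (2*τ) = 2 * Real.sinh τ * Real.cosh τ := by
      rw [two_mul, Real.sinh_add]; ring
    have : D = 2 * Real.sinh τ * (τ * Real.cosh τ - Real.sinh τ) := by
      rw [hD, hc2, hs2]; ring
    rw [this]
    nlinarith [hsp, h1]
  have hApos : 0 < A := Real.sinh_pos_iff.mpr (by linarith)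
  -- u in canonical form
  have hu : u = fun t => A * (Real.sinh (2*t) - 2*t) + B * Real.cosh (2*t)
      + (2 * (1 - α) * D - 1 + Real.cosh (2*τ)) := by
    funext t; simp only [u]; ring
  -- derivatives
  have hd1 : deriv u = fun t => (2*A) * Real.cosh (2*t) + (2*B) * Real.sinh (2*t) + (-(2*A)) := by
    funext t; rw [hu]; exact (hd_base A B _ t).deriv
  have hd2 : deriv (deriv u) = fun t => (4*B) * Real.cosh (2*t) + (4*A) * Real.sinh (2*t) + 0 := by
    funext t; rw [hd1]
    have := (hd_step (2*A) (2*B) (-(2*A)) t).deriv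
    rw [this]; ring_nf
  have hd3 : deriv (deriv (deriv u)) =
      fun t => (8*A) * Real.cosh (2*t) + (8*B) * Real.sinh (2*t) + 0 := by
    funext t; rw [hd2]
    have := (hd_step (4*B) (4*A) 0 t).deriv
    rw [this]; ring_nf
  have hd4 : deriv (deriv (deriv (deriv u))) =
      fun t => (16*B) * Real.cosh (2*t) + (16*A) * Real.sinh (2*t) + 0 := by
    funext t; rw [hd3]
    have := (hd_step (8*A) (8*B) 0 t).deriv
    rw [this]; ring_nf
  have hit2 : iteratedDeriv 2 u = deriv (deriv u) := by
    rw [iteratedDeriv_succ, iteratedDeriv_one]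
  have hit3 : iteratedDeriv 3 u = deriv (deriv (deriv u)) := by
    rw [iteratedDeriv_succ, iteratedDeriv_succ, iteratedDeriv_one]
  have hit4 : iteratedDeriv 4 u = deriv (deriv (deriv (deriv u))) := by
    rw [iteratedDeriv_succ, iteratedDeriv_succ, iteratedDeriv_succ, iteratedDeriv_one]
  have hpyth : Real.cosh (2*τ) ^ 2 - Real.sinh (2*τ) ^ 2 = 1 := Real.cosh_sq_sub_sinh_sq (2*τ)
  have hu0 : u 0 = 2 * (1 - α) * D := by
    rw [hu]; simp [hB]
  have huτ : u τ = -(2 * α * D) := by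
    rw [hu]; simp only [hA, hB, hD]; nlinarith [hpyth]
  have hlam : lam = (4 / (α * (1 - α))) * (A / D) := rfl
  have hαD : α * (1 - α) > 0 := mul_pos hα0 (by linarith)
  refine ⟨?_, ?_, ?_, ?_, ?_, ?_⟩
  · rw [hlam]; positivity
  · intro t _
    rw [hit4, hit2, hd4, hd2]; ring
  · rw [hd1]; simp
  · rw [hd1]
    simp only [hA, hB]
    nlinarith [hpyth]
  · rw [hit3, hd3, hu0, hlam]
    simp only [mul_zero, Real.cosh_zero, Real.sinh_zero]
    have h1α : (1 - α) ≠ 0 := sub_ne_zero.mpr (ne_of_gt hα1)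
    field_simp
    ring
  · rw [hit3, hd3, huτ, hlam]
    show -(1 - α)⁻¹ * ((8*A) * Real.cosh (2*τ) + (8*B) * Real.sinh (2*τ) + 0) = _
    have h3 : (8*A) * Real.cosh (2*τ) + (8*B) * Real.sinh (2*τ) + 0 = 8 * A := by
      simp only [hA, hB]; ring
    rw [h3]
    have hDne : D ≠ 0 := ne_of_gt hDpos
    have hαne : α ≠ 0 := ne_of_gt hα0
    calc -(1 - α)⁻¹ * (8 * A) = -(1 - α)⁻¹ * (8 * A) * (α * α⁻¹) * (D * D⁻¹) := by
          rw [mul_inv_cancel₀ hαne, mul_inv_cancel₀ hDne]; ring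
      _ = 4 / (α * (1 - α)) * (A / D) * -(2 * α * D) := by
          rw [div_eq_mul_inv, div_eq_mul_inv, mul_inv]; ring
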